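/- For the Gaussian Sinkhorn iteration, the rescaled covariance matrices υ_{2n} := σ̄^{-1/2} τ_{2n} σ̄^{-1/2} and υ_{2n+1} := σ^{-1/2} τ_{2n+1} σ^{-1/2} satisfy the recursions υ_{2(n+1)}^{-1} = I + γ υ_{2n+1} γ' and υ_{2n+1}^{-1} = I + γ' υ_{2n} γ, where γ := σ̄^{1/2} τ^{-1} β σ^{1/2}; consequently, υ_{2(n+1)} = Ricc_ϖ(υ_{2n}) with ϖ = (γγ')^{-1}. -/

import Mathlib

open Matrix
open scoped Classical

/-- The principal symmetric positive semidefinite square root of a matrix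
(junk value `0` if the matrix is not positive semidefinite). -/
noncomputable def psqrt {d : ℕ} (A : Matrix (Fin d) (Fin d) ℝ) : Matrix (Fin d) (Fin d) ℝ :=
  if h : A.PosSemidef then
    (h.1.eigenvectorUnitary : Matrix (Fin d) (Fin d) ℝ) *
      diagonal ((↑) ∘ (fun i => Real.sqrt (h.1.eigenvalues i))) *
      (star h.1.eigenvectorUnitary : Matrix (Fin d) (Fin d) ℝ)
  else 0

section Aux

variable {d : ℕ}

private lemma inv_conj_inv (A B : Matrix (Fin d) (Fin d) ℝ) (hA : IsUnit A.det) :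
    (A⁻¹ * B * A⁻¹)⁻¹ = A * B⁻¹ * A := by
  rw [Matrix.mul_inv_rev, Matrix.mul_inv_rev, Matrix.nonsing_inv_nonsing_inv _ hA, mul_assoc]

private lemma sandwich_inv (γ v : Matrix (Fin d) (Fin d) ℝ) (hγ : IsUnit γ.det) :
    γ * (1 + γᵀ * v * γ)⁻¹ * γᵀ = ((γ * γᵀ)⁻¹ + v)⁻¹ := by
  have hγt : IsUnit γᵀ.det := by rwa [Matrix.det_transpose]
  have h1 : (γ * γᵀ)⁻¹ + v = γᵀ⁻¹ * (1 + γᵀ * v * γ) * γ⁻¹ := by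
    have hv : γᵀ⁻¹ * (γᵀ * v * γ) * γ⁻¹ = v := by
      rw [mul_assoc γᵀ v γ, ← mul_assoc, Matrix.nonsing_inv_mul _ hγt, one_mul, mul_assoc,
        Matrix.mul_nonsing_inv _ hγ, mul_one]
    rw [mul_add, mul_one, add_mul, hv, Matrix.mul_inv_rev]
  rw [h1, Matrix.mul_inv_rev, Matrix.mul_inv_rev, Matrix.nonsing_inv_nonsing_inv _ hγ,
    Matrix.nonsing_inv_nonsing_inv _ hγt, ← mul_assoc]

private lemma psqrt_of_posDef {A : Matrix (Fin d) (Fin d) ℝ} (hA : A.PosDef) :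
    psqrt A * psqrt A = A ∧ (psqrt A)ᵀ = psqrt A ∧ IsUnit (psqrt A).det := by
  have h := hA.posSemidef
  have h1 : psqrt A = (h.1.eigenvectorUnitary : Matrix (Fin d) (Fin d) ℝ) *
      diagonal ((↑) ∘ (fun i => Real.sqrt (h.1.eigenvalues i))) *
      (star h.1.eigenvectorUnitary : Matrix (Fin d) (Fin d) ℝ) := by rw [psqrt, dif_pos h]
  have hU : (star h.1.eigenvectorUnitary : Matrix (Fin d) (Fin d) ℝ) *
      (h.1.eigenvectorUnitary : Matrix (Fin d) (Fin d) ℝ) = 1 :=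
    Matrix.mem_unitaryGroup_iff'.mp h.1.eigenvectorUnitary.2
  have hmul : psqrt A * psqrt A = A := by
    rw [h1]
    conv_rhs => rw [h.1.spectral_theorem, Unitary.conjStarAlgAut_apply]
    have hd : diagonal ((↑) ∘ (fun i => Real.sqrt (h.1.eigenvalues i))) *
        diagonal ((↑) ∘ (fun i => Real.sqrt (h.1.eigenvalues i))) =
        diagonal (RCLike.ofReal ∘ h.1.eigenvalues : Fin d → ℝ) := by
      rw [diagonal_mul_diagonal]
      congr 1
      funext i
      simp [Real.mul_self_sqrt (h.eigenvalues_nonneg i)]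
    calc _ = (h.1.eigenvectorUnitary : Matrix (Fin d) (Fin d) ℝ) *
          (diagonal ((↑) ∘ (fun i => Real.sqrt (h.1.eigenvalues i))) *
          ((star h.1.eigenvectorUnitary : Matrix (Fin d) (Fin d) ℝ) *
          (h.1.eigenvectorUnitary : Matrix (Fin d) (Fin d) ℝ)) *
          diagonal ((↑) ∘ (fun i => Real.sqrt (h.1.eigenvalues i)))) *
          (star h.1.eigenvectorUnitary : Matrix (Fin d) (Fin d) ℝ) := by
            simp only [mul_assoc]
      _ = _ := by rw [hU, mul_one, hd]
  have hsym : (psqrt A)ᵀ = psqrt A := by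
    rw [h1, ← Matrix.conjTranspose_eq_transpose_of_trivial]
    simp [Matrix.conjTranspose_mul, Matrix.star_eq_conjTranspose, mul_assoc]
  have hdet : IsUnit (psqrt A).det := by
    have h2 : (psqrt A).det * (psqrt A).det = A.det := by rw [← Matrix.det_mul, hmul]
    have h3 : A.det ≠ 0 := hA.det_pos.ne'
    refine isUnit_iff_ne_zero.mpr fun h0 => h3 ?_
    rw [← h2, h0, mul_zero]
  exact ⟨hmul, hsym, hdet⟩

end Aux

/-- For the Gaussian Sinkhorn iteration, the rescaled covariance matrices
`υ_{2n} := σbar^{-1/2} τ_{2n} σbar^{-1/2}` and `υ_{2n+1} := σ^{-1/2} τ_{2n+1} σ^{-1/2}`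
satisfy the recursions `υ_{2(n+1)}⁻¹ = I + γ υ_{2n+1} γᵀ` and `υ_{2n+1}⁻¹ = I + γᵀ υ_{2n} γ`
with `γ := σbar^{1/2} τ⁻¹ β σ^{1/2}`; consequently `υ_{2(n+1)} = Ricc_ϖ(υ_{2n})` with
`ϖ = (γγᵀ)⁻¹`. -/
theorem gaussian_sinkhorn_riccati_recursion {d : ℕ}
    (σ σbar : Matrix (Fin d) (Fin d) ℝ) (hσ : σ.PosDef) (hσbar : σbar.PosDef)
    (β0 τ0 : Matrix (Fin d) (Fin d) ℝ) (hβ0 : IsUnit β0) (hτ0 : τ0.PosDef)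
    (β τ : ℕ → Matrix (Fin d) (Fin d) ℝ)
    (hβinit : β 0 = β0) (hτinit : τ 0 = τ0)
    (hgain_even : ∀ n, β (2 * n) = τ (2 * n) * τ0⁻¹ * β0)
    (hgain_odd : ∀ n, β (2 * n + 1) = τ (2 * n + 1) * β0ᵀ * τ0⁻¹)
    (hτodd : ∀ n, τ (2 * n + 1) = (σ⁻¹ + (β (2 * n))ᵀ * (τ (2 * n))⁻¹ * β (2 * n))⁻¹)
    (hτeven : ∀ n, τ (2 * n + 2) =
      (σbar⁻¹ + (β (2 * n + 1))ᵀ * (τ (2 * n + 1))⁻¹ * β (2 * n + 1))⁻¹)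
    (γ : Matrix (Fin d) (Fin d) ℝ) (hγ : γ = psqrt σbar * τ0⁻¹ * β0 * psqrt σ) :
    ∀ n : ℕ,
      ((psqrt σbar)⁻¹ * τ (2 * n + 2) * (psqrt σbar)⁻¹)⁻¹ =
        1 + γ * ((psqrt σ)⁻¹ * τ (2 * n + 1) * (psqrt σ)⁻¹) * γᵀ ∧
      ((psqrt σ)⁻¹ * τ (2 * n + 1) * (psqrt σ)⁻¹)⁻¹ =
        1 + γᵀ * ((psqrt σbar)⁻¹ * τ (2 * n) * (psqrt σbar)⁻¹) * γ ∧
      (psqrt σbar)⁻¹ * τ (2 * n + 2) * (psqrt σbar)⁻¹ =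
        (1 + ((γ * γᵀ)⁻¹ + (psqrt σbar)⁻¹ * τ (2 * n) * (psqrt σbar)⁻¹)⁻¹)⁻¹ := by
  set S := psqrt σ with hSdef
  set Sb := psqrt σbar with hSbdef
  obtain ⟨hSS, hSsym, hSdet⟩ := psqrt_of_posDef hσ
  obtain ⟨hSbS, hSbsym, hSbdet⟩ := psqrt_of_posDef hσbar
  rw [← hSdef] at hSS hSsym hSdet
  rw [← hSbdef] at hSbS hSbsym hSbdet
  have hβ0det : IsUnit β0.det := (Matrix.isUnit_iff_isUnit_det _).mp hβ0
  have hτ0det : IsUnit τ0.det := hτ0.det_pos.ne'.isUnit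
  have hτ0sym : τ0ᵀ = τ0 := by
    rw [← Matrix.conjTranspose_eq_transpose_of_trivial]; exact hτ0.isHermitian
  -- positive definiteness along the iteration
  have hpos : ∀ n, (τ (2 * n)).PosDef ∧ (τ (2 * n + 1)).PosDef := by
    intro n
    induction n with
    | zero =>
      have h0 : (τ 0).PosDef := by rw [hτinit]; exact hτ0
      have h1 : (τ 1).PosDef := by
        have := hτodd 0
        rw [show 2 * 0 + 1 = 1 from rfl, show 2 * 0 = 0 from rfl] at this
        rw [this]
        refine (Matrix.PosDef.add_posSemidef hσ.inv ?_).inv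
        have := (h0.inv.posSemidef).conjTranspose_mul_mul_same (β 0)
        rwa [Matrix.conjTranspose_eq_transpose_of_trivial] at this
      exact ⟨h0, h1⟩
    | succ n ih =>
      obtain ⟨hT, hTo⟩ := ih
      have hTe : (τ (2 * (n + 1))).PosDef := by
        have h2 : 2 * (n + 1) = 2 * n + 2 := by ring
        rw [h2, hτeven n]
        refine (Matrix.PosDef.add_posSemidef hσbar.inv ?_).inv
        have := (hTo.inv.posSemidef).conjTranspose_mul_mul_same (β (2 * n + 1))
        rwa [Matrix.conjTranspose_eq_transpose_of_trivial] at this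
      have hTon : (τ (2 * (n + 1) + 1)).PosDef := by
        rw [hτodd (n + 1)]
        refine (Matrix.PosDef.add_posSemidef hσ.inv ?_).inv
        have := (hTe.inv.posSemidef).conjTranspose_mul_mul_same (β (2 * (n + 1)))
        rwa [Matrix.conjTranspose_eq_transpose_of_trivial] at this
      exact ⟨hTe, hTon⟩
  intro n
  obtain ⟨hT, hTo⟩ := hpos n
  have hTe : (τ (2 * n + 2)).PosDef := by
    have := (hpos (n + 1)).1
    rwa [show 2 * (n + 1) = 2 * n + 2 from by ring] at this
  have hTdet : IsUnit (τ (2 * n)).det := hT.det_pos.ne'.isUnit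
  have hTodet : IsUnit (τ (2 * n + 1)).det := hTo.det_pos.ne'.isUnit
  have hTedet : IsUnit (τ (2 * n + 2)).det := hTe.det_pos.ne'.isUnit
  have hTsym : (τ (2 * n))ᵀ = τ (2 * n) := by
    rw [← Matrix.conjTranspose_eq_transpose_of_trivial]; exact hT.isHermitian
  have hTosym : (τ (2 * n + 1))ᵀ = τ (2 * n + 1) := by
    rw [← Matrix.conjTranspose_eq_transpose_of_trivial]; exact hTo.isHermitian
  -- inverses of the covariances
  have hσinv : σ⁻¹ = S⁻¹ * S⁻¹ := by rw [← hSS, Matrix.mul_inv_rev]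
  have hσbinv : σbar⁻¹ = Sb⁻¹ * Sb⁻¹ := by rw [← hSbS, Matrix.mul_inv_rev]
  -- cancellation lemmas
  have cS : S * S⁻¹ = 1 := Matrix.mul_nonsing_inv _ hSdet
  have cS' : S⁻¹ * S = 1 := Matrix.nonsing_inv_mul _ hSdet
  have cSb : Sb * Sb⁻¹ = 1 := Matrix.mul_nonsing_inv _ hSbdet
  have cSb' : Sb⁻¹ * Sb = 1 := Matrix.nonsing_inv_mul _ hSbdet
  have cT : τ (2 * n) * (τ (2 * n))⁻¹ = 1 := Matrix.mul_nonsing_inv _ hTdet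
  have cTo : τ (2 * n + 1) * (τ (2 * n + 1))⁻¹ = 1 := Matrix.mul_nonsing_inv _ hTodet
  have aS : ∀ X, S * (S⁻¹ * X) = X := fun X => by rw [← mul_assoc, cS, one_mul]
  have aS' : ∀ X, S⁻¹ * (S * X) = X := fun X => by rw [← mul_assoc, cS', one_mul]
  have aSb : ∀ X, Sb * (Sb⁻¹ * X) = X := fun X => by rw [← mul_assoc, cSb, one_mul]
  have aSb' : ∀ X, Sb⁻¹ * (Sb * X) = X := fun X => by rw [← mul_assoc, cSb', one_mul]
  have aT : ∀ X, τ (2 * n) * ((τ (2 * n))⁻¹ * X) = X := fun X => by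
    rw [← mul_assoc, cT, one_mul]
  have aTo : ∀ X, τ (2 * n + 1) * ((τ (2 * n + 1))⁻¹ * X) = X := fun X => by
    rw [← mul_assoc, cTo, one_mul]
  -- invertibility of the inner matrices
  have hInnerOdd : (σ⁻¹ + (β (2 * n))ᵀ * (τ (2 * n))⁻¹ * β (2 * n)).PosDef := by
    refine Matrix.PosDef.add_posSemidef hσ.inv ?_
    have := (hT.inv.posSemidef).conjTranspose_mul_mul_same (β (2 * n))
    rwa [Matrix.conjTranspose_eq_transpose_of_trivial] at this
  have hInnerEven :
      (σbar⁻¹ + (β (2 * n + 1))ᵀ * (τ (2 * n + 1))⁻¹ * β (2 * n + 1)).PosDef := by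
    refine Matrix.PosDef.add_posSemidef hσbar.inv ?_
    have := (hTo.inv.posSemidef).conjTranspose_mul_mul_same (β (2 * n + 1))
    rwa [Matrix.conjTranspose_eq_transpose_of_trivial] at this
  -- part 2 : odd recursion
  have part2 : (S⁻¹ * τ (2 * n + 1) * S⁻¹)⁻¹ =
      1 + γᵀ * (Sb⁻¹ * τ (2 * n) * Sb⁻¹) * γ := by
    rw [inv_conj_inv _ _ hSdet, hτodd n,
      Matrix.nonsing_inv_nonsing_inv _ hInnerOdd.det_pos.ne'.isUnit,
      hgain_even n, hγ, hσinv]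
    simp only [Matrix.transpose_mul, Matrix.transpose_nonsing_inv, hτ0sym, hTsym, hSsym,
      hSbsym, Matrix.transpose_transpose, mul_add, add_mul, mul_assoc, aS, aS', aSb, aSb',
      aT, aTo, cS, cS', cSb, cSb']
  -- part 1 : even recursion
  have part1 : (Sb⁻¹ * τ (2 * n + 2) * Sb⁻¹)⁻¹ =
      1 + γ * (S⁻¹ * τ (2 * n + 1) * S⁻¹) * γᵀ := by
    rw [inv_conj_inv _ _ hSbdet, hτeven n,
      Matrix.nonsing_inv_nonsing_inv _ hInnerEven.det_pos.ne'.isUnit,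
      hgain_odd n, hγ, hσbinv]
    simp only [Matrix.transpose_mul, Matrix.transpose_nonsing_inv, hτ0sym, hTosym, hSsym,
      hSbsym, Matrix.transpose_transpose, mul_add, add_mul, mul_assoc, aS, aS', aSb, aSb',
      aT, aTo, cS, cS', cSb, cSb']
  refine ⟨part1, part2, ?_⟩
  -- part 3 : Riccati form
  have hγdet : IsUnit γ.det := by
    rw [hγ]
    simp only [Matrix.det_mul]
    exact ((hSbdet.mul (Matrix.isUnit_nonsing_inv_det _ hτ0det)).mul hβ0det).mul hSdet
  have hυodet : IsUnit (S⁻¹ * τ (2 * n + 1) * S⁻¹).det := by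
    simp only [Matrix.det_mul]
    exact ((Matrix.isUnit_nonsing_inv_det _ hSdet).mul hTodet).mul
      (Matrix.isUnit_nonsing_inv_det _ hSdet)
  have hυedet : IsUnit (Sb⁻¹ * τ (2 * n + 2) * Sb⁻¹).det := by
    simp only [Matrix.det_mul]
    exact ((Matrix.isUnit_nonsing_inv_det _ hSbdet).mul hTedet).mul
      (Matrix.isUnit_nonsing_inv_det _ hSbdet)
  have hυo : S⁻¹ * τ (2 * n + 1) * S⁻¹ =
      (1 + γᵀ * (Sb⁻¹ * τ (2 * n) * Sb⁻¹) * γ)⁻¹ := by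
    rw [← part2, Matrix.nonsing_inv_nonsing_inv _ hυodet]
  calc Sb⁻¹ * τ (2 * n + 2) * Sb⁻¹
      = ((Sb⁻¹ * τ (2 * n + 2) * Sb⁻¹)⁻¹)⁻¹ :=
        (Matrix.nonsing_inv_nonsing_inv _ hυedet).symm
    _ = (1 + γ * (1 + γᵀ * (Sb⁻¹ * τ (2 * n) * Sb⁻¹) * γ)⁻¹ * γᵀ)⁻¹ := by
        rw [part1, hυo]
    _ = (1 + ((γ * γᵀ)⁻¹ + Sb⁻¹ * τ (2 * n) * Sb⁻¹)⁻¹)⁻¹ := by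
        rw [sandwich_inv _ _ hγdet]
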